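/- Let D = {v₁,…,v_k} ⊆ 𝔽₂ⁿ, let I = {K₁,…,K_m} be a partition of {1,…,n} such that each block K_j satisfies 𝒫_D(K_j). Fix v = v₁, and define the matrix A = (a_{ij}) with a_{ij} = 1 if d_{K_j}(v₁, v_i) = 0 and a_{ij} = −1 if d_{K_j}(v₁, v_i) = |K_j|. Then p ∈ 𝔽₂ⁿ is an ε-cover-template of D if and only if the vector N = (d_{K₁}(p,v₁),…,d_{K_m}(p,v₁)) satisfies the linear inequalities (A N)_i ≤ ε − d_H(v₁, v_i) for all i ∈ {1,…,k}. -/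

import Mathlib

/-- Hamming distance restricted to a set `K` of coordinates. -/
def dK {n : ℕ} (K : Finset (Fin n)) (u v : Fin n → Bool) : ℕ :=
  (K.filter fun i => u i ≠ v i).card

theorem hamming_eq_sum {n m : ℕ} (K : Fin m → Finset (Fin n))
    (hdisj : ∀ j j' : Fin m, j ≠ j' → Disjoint (K j) (K j'))
    (hcover : ∀ i : Fin n, ∃ j, i ∈ K j) (u w : Fin n → Bool) :
    hammingDist u w = ∑ j : Fin m, dK (K j) u w := by
  classical
  have huniv : (Finset.univ : Finset (Fin n)) = Finset.univ.biUnion K := by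
    ext i
    simpa using hcover i
  simp only [hammingDist, dK]
  show (Finset.univ.filter fun i => u i ≠ w i).card = _
  rw [huniv, Finset.filter_biUnion, Finset.card_biUnion]
  intro j _ j' _ hjj'
  exact (hdisj j j' hjj').mono (Finset.filter_subset _ _) (Finset.filter_subset _ _)

/-- With `D = {v₁,…,v_k}` and a partition `I = {K₁,…,K_m}` of the
coordinates into nonempty blocks each satisfying `𝒫_D`, and with the matrix
`A` defined by `a_{ij} = 1` if `d_{K_j}(v₁,v_i) = 0` and `a_{ij} = −1` if
`d_{K_j}(v₁,v_i) = |K_j|`, a point `p` is an ε-cover-template of `D` iff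
`(A N)_i ≤ ε − d_H(v₁,v_i)` for all `i`, where `N_j = d_{K_j}(p,v₁)`. -/
theorem stmt_9 (n k m : ℕ) (hk : 0 < k) (v : Fin k → (Fin n → Bool))
    (K : Fin m → Finset (Fin n))
    (hne : ∀ j, (K j).Nonempty)
    (hdisj : ∀ j j' : Fin m, j ≠ j' → Disjoint (K j) (K j'))
    (hcover : ∀ i : Fin n, ∃ j, i ∈ K j)
    (hP : ∀ j : Fin m, ∀ i i' : Fin k,
        dK (K j) (v i) (v i') = 0 ∨ dK (K j) (v i) (v i') = (K j).card)
    (A : Fin k → Fin m → ℤ)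
    (hA : ∀ i j, (dK (K j) (v ⟨0, hk⟩) (v i) = 0 → A i j = 1) ∧
        (dK (K j) (v ⟨0, hk⟩) (v i) = (K j).card → A i j = -1))
    (ε : ℕ) (p : Fin n → Bool) :
    (∀ i : Fin k, hammingDist p (v i) ≤ ε) ↔
      (∀ i : Fin k,
        (∑ j : Fin m, A i j * (dK (K j) p (v ⟨0, hk⟩) : ℤ)) ≤
          (ε : ℤ) - (hammingDist (v ⟨0, hk⟩) (v i) : ℤ)) := by
  classical
  set v0 := v ⟨0, hk⟩ with hv0
  -- key identity per block
  have key : ∀ i j, (dK (K j) p (v i) : ℤ)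
      = A i j * (dK (K j) p v0 : ℤ) + (dK (K j) v0 (v i) : ℤ) := by
    intro i j
    rcases hP j ⟨0, hk⟩ i with h0 | hc
    · -- v0 and v i agree on K j
      have hagree : ∀ l ∈ K j, v0 l = v i l := by
        intro l hl
        by_contra hne'
        have : l ∈ (K j).filter fun l => v0 l ≠ v i l := Finset.mem_filter.2 ⟨hl, hne'⟩
        rw [dK, Finset.card_eq_zero] at h0
        simp [h0, hv0] at this
      have : dK (K j) p (v i) = dK (K j) p v0 := by
        unfold dK
        congr 1
        apply Finset.filter_congr
        intro l hl
        simp [hagree l hl]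
      rw [this, (hA i j).1 (hv0 ▸ h0), h0]
      push_cast
      ring
    · -- v0 and v i differ everywhere on K j
      have hfull : ((K j).filter fun l => v0 l ≠ v i l) = K j :=
        Finset.eq_of_subset_of_card_le (Finset.filter_subset _ _) (le_of_eq hc.symm)
      have hdiff : ∀ l ∈ K j, v0 l ≠ v i l := by
        intro l hl
        have := hfull ▸ hl
        exact (Finset.mem_filter.1 this).2
      have hcompl : dK (K j) p (v i) = (K j).card - dK (K j) p v0 := by
        unfold dK
        have : ((K j).filter fun l => p l ≠ v i l)
            = (K j) \ ((K j).filter fun l => p l ≠ v0 l) := by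
          ext l
          simp only [Finset.mem_filter, Finset.mem_sdiff, not_and]
          constructor
          · intro ⟨hl, hne'⟩
            refine ⟨hl, fun _ h => hne' ?_⟩
            have := hdiff l hl
            revert h hne' this
            cases p l <;> cases v0 l <;> cases v i l <;> simp
          · intro ⟨hl, h⟩
            refine ⟨hl, ?_⟩
            have h2 := h hl
            have := hdiff l hl
            revert h2 this
            cases p l <;> cases v0 l <;> cases v i l <;> simp
        rw [this, Finset.card_sdiff_of_subset (Finset.filter_subset _ _)]
      have hle : dK (K j) p v0 ≤ (K j).card := Finset.card_filter_le _ _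
      rw [hcompl, (hA i j).2 (hv0 ▸ hc), hc]
      push_cast [hle]
      ring
  constructor <;> intro h i <;> have hi := h i <;>
    rw [hamming_eq_sum K hdisj hcover p (v i),
        hamming_eq_sum K hdisj hcover v0 (v i)] at *
  · have : (∑ j, (dK (K j) p (v i) : ℤ))
        = ∑ j, (A i j * (dK (K j) p v0 : ℤ) + (dK (K j) v0 (v i) : ℤ)) := by
      exact Finset.sum_congr rfl fun j _ => key i j
    rw [Finset.sum_add_distrib] at this
    have hcast : ((∑ j, dK (K j) p (v i) : ℕ) : ℤ) ≤ (ε : ℤ) := by exact_mod_cast hi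
    push_cast at hcast this ⊢
    linarith
  · have : (∑ j, (dK (K j) p (v i) : ℤ))
        = ∑ j, (A i j * (dK (K j) p v0 : ℤ) + (dK (K j) v0 (v i) : ℤ)) := by
      exact Finset.sum_congr rfl fun j _ => key i j
    rw [Finset.sum_add_distrib] at this
    have : ((∑ j, dK (K j) p (v i) : ℕ) : ℤ) ≤ (ε : ℤ) := by
      push_cast at this hi ⊢
      linarith
    exact_mod_cast this
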